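/- For every d, k ∈ ℕ there exists α = α(d, k) ∈ ℝ satisfying the following. For any set P of n_1 points in ℝ^d and any finite list B of n_2 boxes in ℝ^d (each box a product of d intervals, each interval with open or closed endpoints, possibly unbounded), if the incidence graph on P × B is K_{k,k}-free, then the number of incidences (pairs (p, R) ∈ P × B with p ∈ R) is at most α · n · log^{2d}(n), where n = n_1 + n_2. -/

import Mathlib

/-- The box `∏_j I_j ⊆ ℝ^d` determined by a family of intervals `I : Fin d → Set ℝ`. -/
def boxOf {d : ℕ} (I : Fin d → Set ℝ) : Set (Fin d → ℝ) :=
  {x | ∀ j, x j ∈ I j}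


/-- The dyadic interval of level `t.1` and index `t.2`. -/
def dyInt (t : ℕ × ℕ) : Finset ℕ := Finset.Ico (t.2 * 2 ^ t.1) ((t.2 + 1) * 2 ^ t.1)

/-- `T` is an exact dyadic cover of `Ico a b`. -/
def DyCovers (T : Finset (ℕ × ℕ)) (a b : ℕ) : Prop :=
  ∀ x, x ∈ Finset.Ico a b ↔ ∃ t ∈ T, x ∈ dyInt t

lemma mem_dyInt_shift {s L : ℕ} (hs : s ≤ L) (c x : ℕ) :
    x + 2 ^ L ∈ dyInt (s, c + 2 ^ (L - s)) ↔ x ∈ dyInt (s, c) := by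
  have h : 2 ^ (L - s) * 2 ^ s = 2 ^ L := by rw [← pow_add, Nat.sub_add_cancel hs]
  simp only [dyInt, Finset.mem_Ico, add_mul, one_mul, h]
  omega

lemma dyInt_shift_lower {s L : ℕ} (hs : s ≤ L) (c x : ℕ)
    (hx : x ∈ dyInt (s, c + 2 ^ (L - s))) : 2 ^ L ≤ x := by
  have h : 2 ^ (L - s) * 2 ^ s = 2 ^ L := by rw [← pow_add, Nat.sub_add_cancel hs]
  simp only [dyInt, Finset.mem_Ico, add_mul] at hx
  omega

lemma dyCovers_shift {L a b : ℕ} {T : Finset (ℕ × ℕ)}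
    (hlev : ∀ t ∈ T, t.1 ≤ L) (hcov : DyCovers T a b) :
    ∃ T' : Finset (ℕ × ℕ), T'.card ≤ T.card ∧ (∀ t ∈ T', t.1 ≤ L) ∧
      DyCovers T' (a + 2 ^ L) (b + 2 ^ L) := by
  refine ⟨T.image fun t => (t.1, t.2 + 2 ^ (L - t.1)), Finset.card_image_le, ?_, ?_⟩
  · intro t ht
    obtain ⟨u, hu, rfl⟩ := Finset.mem_image.1 ht
    exact hlev u hu
  · intro x
    constructor
    · intro hx
      rw [Finset.mem_Ico] at hx
      have hx2 : 2 ^ L ≤ x := le_trans (Nat.le_add_left _ _) hx.1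
      obtain ⟨t, ht, hmem⟩ := (hcov (x - 2 ^ L)).1 (by rw [Finset.mem_Ico]; omega)
      refine ⟨(t.1, t.2 + 2 ^ (L - t.1)), Finset.mem_image.2 ⟨t, ht, rfl⟩, ?_⟩
      have := (mem_dyInt_shift (hlev t ht) t.2 (x - 2 ^ L)).2 hmem
      rwa [Nat.sub_add_cancel hx2] at this
    · rintro ⟨t', ht', hmem⟩
      obtain ⟨t, ht, rfl⟩ := Finset.mem_image.1 ht'
      have hx2 : 2 ^ L ≤ x := dyInt_shift_lower (hlev t ht) t.2 x hmem
      rw [← Nat.sub_add_cancel hx2] at hmem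
      have := (mem_dyInt_shift (hlev t ht) t.2 (x - 2 ^ L)).1 hmem
      have := (hcov (x - 2 ^ L)).2 ⟨t, ht, this⟩
      rw [Finset.mem_Ico] at *
      omega

lemma dyCovers_union {T₁ T₂ : Finset (ℕ × ℕ)} {a m b : ℕ} (ham : a ≤ m) (hmb : m ≤ b)
    (h₁ : DyCovers T₁ a m) (h₂ : DyCovers T₂ m b) : DyCovers (T₁ ∪ T₂) a b := by
  intro x
  constructor
  · intro hx
    rw [Finset.mem_Ico] at hx
    rcases lt_or_ge x m with h | h
    · obtain ⟨t, ht, hm⟩ := (h₁ x).1 (by rw [Finset.mem_Ico]; omega)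
      exact ⟨t, Finset.mem_union_left _ ht, hm⟩
    · obtain ⟨t, ht, hm⟩ := (h₂ x).1 (by rw [Finset.mem_Ico]; omega)
      exact ⟨t, Finset.mem_union_right _ ht, hm⟩
  · rintro ⟨t, ht, hm⟩
    rcases Finset.mem_union.1 ht with h | h
    · have := (h₁ x).2 ⟨t, h, hm⟩; rw [Finset.mem_Ico] at *; omega
    · have := (h₂ x).2 ⟨t, h, hm⟩; rw [Finset.mem_Ico] at *; omega

lemma dyCovers_single (L : ℕ) (c : ℕ) : DyCovers {(L, c)} (c * 2 ^ L) ((c + 1) * 2 ^ L) := by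
  intro x
  simp [dyInt]

lemma dyCovers_empty (a b : ℕ) (h : b ≤ a) : DyCovers ∅ a b := by
  intro x
  simp [Finset.Ico_eq_empty_iff.2 (by omega : ¬ a < b)]

/-- a suffix `[a, 2^L)` is covered by at most `L+1` dyadic intervals. -/
lemma dyCovers_suffix : ∀ L a, a ≤ 2 ^ L →
    ∃ T : Finset (ℕ × ℕ), T.card ≤ L + 1 ∧ (∀ t ∈ T, t.1 ≤ L) ∧ DyCovers T a (2 ^ L) := by
  intro L
  induction L with
  | zero =>
    intro a ha
    interval_cases a
    · exact ⟨{(0, 0)}, by simp, by simp, by simpa using dyCovers_single 0 0⟩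
    · exact ⟨∅, by simp, by simp, dyCovers_empty _ _ le_rfl⟩
  | succ L ih =>
    intro a ha
    have h2 : 2 ^ (L + 1) = 2 ^ L + 2 ^ L := by rw [pow_succ]; omega
    rcases le_or_gt (2 ^ L) a with h | h
    · obtain ⟨T, hc, hl, hcov⟩ := ih (a - 2 ^ L) (by omega)
      obtain ⟨T', hc', hl', hcov'⟩ := dyCovers_shift hl hcov
      refine ⟨T', by omega, fun t ht => le_trans (hl' t ht) (Nat.le_succ L), ?_⟩
      have e1 : a - 2 ^ L + 2 ^ L = a := by omega
      have e2 : 2 ^ L + 2 ^ L = 2 ^ (L + 1) := by omega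
      rwa [e1, e2] at hcov'
    · obtain ⟨T, hc, hl, hcov⟩ := ih a (by omega)
      refine ⟨T ∪ {(L, 1)}, le_trans (Finset.card_union_le _ _) (by simp; omega),
        ?_, dyCovers_union (le_of_lt h) (by omega) hcov ?_⟩
      · intro t ht
        rcases Finset.mem_union.1 ht with ht | ht
        · exact le_trans (hl t ht) (Nat.le_succ L)
        · rw [Finset.mem_singleton] at ht; subst ht; exact Nat.le_succ L
      · have := dyCovers_single L 1
        rw [one_mul] at this
        rwa [(by omega : (1 + 1) * 2 ^ L = 2 ^ (L + 1))] at this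

/-- a prefix `[0, b)` with `b ≤ 2^L` is covered by at most `L+1` dyadic intervals. -/
lemma dyCovers_prefix : ∀ L b, b ≤ 2 ^ L →
    ∃ T : Finset (ℕ × ℕ), T.card ≤ L + 1 ∧ (∀ t ∈ T, t.1 ≤ L) ∧ DyCovers T 0 b := by
  intro L
  induction L with
  | zero =>
    intro b hb
    interval_cases b
    · exact ⟨∅, by simp, by simp, dyCovers_empty _ _ le_rfl⟩
    · exact ⟨{(0, 0)}, by simp, by simp, by simpa using dyCovers_single 0 0⟩
  | succ L ih =>
    intro b hb
    have h2 : 2 ^ (L + 1) = 2 ^ L + 2 ^ L := by rw [pow_succ]; omega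
    rcases le_or_gt b (2 ^ L) with h | h
    · obtain ⟨T, hc, hl, hcov⟩ := ih b h
      exact ⟨T, by omega, fun t ht => le_trans (hl t ht) (Nat.le_succ L), hcov⟩
    · obtain ⟨T, hc, hl, hcov⟩ := ih (b - 2 ^ L) (by omega)
      obtain ⟨T', hc', hl', hcov'⟩ := dyCovers_shift hl hcov
      rw [Nat.sub_add_cancel (le_of_lt h), zero_add] at hcov'
      refine ⟨{(L, 0)} ∪ T', le_trans (Finset.card_union_le _ _) (by simp; omega),
        ?_, dyCovers_union (Nat.zero_le _) (le_of_lt h)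
          (by simpa using dyCovers_single L 0) hcov'⟩
      intro t ht
      rcases Finset.mem_union.1 ht with ht | ht
      · rw [Finset.mem_singleton] at ht; subst ht; exact Nat.le_succ L
      · exact le_trans (hl' t ht) (Nat.le_succ L)

/-- main dyadic cover lemma. -/
lemma dyCovers_main : ∀ L a b, b ≤ 2 ^ L →
    ∃ T : Finset (ℕ × ℕ), T.card ≤ 2 * (L + 1) ∧ (∀ t ∈ T, t.1 ≤ L) ∧ DyCovers T a b := by
  intro L
  induction L with
  | zero =>
    intro a b hb
    rcases le_or_gt b a with h | h
    · exact ⟨∅, by simp, by simp, dyCovers_empty _ _ h⟩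
    · have : a = 0 ∧ b = 1 := by omega
      obtain ⟨rfl, rfl⟩ := this
      exact ⟨{(0, 0)}, by simp, by simp, by simpa using dyCovers_single 0 0⟩
  | succ L ih =>
    intro a b hb
    have h2 : 2 ^ (L + 1) = 2 ^ L + 2 ^ L := by rw [pow_succ]; omega
    rcases le_or_gt b (2 ^ L) with h | h
    · obtain ⟨T, hc, hl, hcov⟩ := ih a b h
      exact ⟨T, by omega, fun t ht => le_trans (hl t ht) (Nat.le_succ L), hcov⟩
    rcases le_or_gt (2 ^ L) a with h' | h'
    · obtain ⟨T, hc, hl, hcov⟩ := ih (a - 2 ^ L) (b - 2 ^ L) (by omega)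
      obtain ⟨T', hc', hl', hcov'⟩ := dyCovers_shift hl hcov
      rw [Nat.sub_add_cancel h', Nat.sub_add_cancel (by omega)] at hcov'
      exact ⟨T', by omega, fun t ht => le_trans (hl' t ht) (Nat.le_succ L), hcov'⟩
    · obtain ⟨T₁, hc₁, hl₁, hcov₁⟩ := dyCovers_suffix L a (le_of_lt h')
      obtain ⟨T₂, hc₂, hl₂, hcov₂⟩ := dyCovers_prefix L (b - 2 ^ L) (by omega)
      obtain ⟨T₂', hc₂', hl₂', hcov₂'⟩ := dyCovers_shift hl₂ hcov₂
      rw [Nat.sub_add_cancel (le_of_lt h), zero_add] at hcov₂'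
      refine ⟨T₁ ∪ T₂', le_trans (Finset.card_union_le _ _) (by omega),
        ?_, dyCovers_union (le_of_lt h') (le_of_lt h) hcov₁ hcov₂'⟩
      intro t ht
      rcases Finset.mem_union.1 ht with ht | ht
      · exact le_trans (hl₁ t ht) (Nat.le_succ L)
      · exact le_trans (hl₂' t ht) (Nat.le_succ L)

lemma sum_sum_eq {α : Type*} [DecidableEq α] {n₂ : ℕ} (S : Fin n₂ → Finset α) (f : α → ℕ) :
    ∑ q, ∑ σ ∈ S q, f σ =
      ∑ σ ∈ Finset.univ.biUnion S, (Finset.univ.filter fun q => σ ∈ S q).card * f σ := by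
  calc ∑ q, ∑ σ ∈ S q, f σ
      = ∑ q, ∑ σ ∈ Finset.univ.biUnion S, if σ ∈ S q then f σ else 0 := by
        refine Finset.sum_congr rfl fun q _ => ?_
        rw [Finset.sum_ite_mem,
          Finset.inter_eq_right.2 (Finset.subset_biUnion_of_mem S (Finset.mem_univ q))]
    _ = ∑ σ ∈ Finset.univ.biUnion S, ∑ q, if σ ∈ S q then f σ else 0 := Finset.sum_comm
    _ = _ := by
        refine Finset.sum_congr rfl fun σ _ => ?_
        rw [← Finset.sum_filter, Finset.sum_const, smul_eq_mul]

lemma shapes_containing {d L : ℕ} (g : Fin d → ℕ) (U : Finset (Fin d → ℕ × ℕ))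
    (hU : ∀ σ ∈ U, ∀ j, (σ j).1 ≤ L) :
    (U.filter fun σ => ∀ j, g j ∈ dyInt (σ j)).card ≤ (L + 1) ^ d := by
  classical
  have hcard : (Fintype.piFinset fun _ : Fin d => Finset.range (L + 1)).card = (L + 1) ^ d := by
    simp [Fintype.card_piFinset]
  rw [← hcard]
  apply Finset.card_le_card_of_injOn (fun σ j => (σ j).1)
  · intro σ hσ
    rw [Finset.mem_coe, Finset.mem_filter] at hσ
    exact Fintype.mem_piFinset.2 fun j => Finset.mem_range.2 (Nat.lt_succ_of_le (hU σ hσ.1 j))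
  · intro σ₁ h₁ σ₂ h₂ he
    rw [Finset.mem_coe, Finset.mem_filter] at h₁ h₂
    funext j
    have hlev : (σ₁ j).1 = (σ₂ j).1 := congrFun he j
    have e1 : g j / 2 ^ (σ₁ j).1 = (σ₁ j).2 := by
      have := h₁.2 j
      simp only [dyInt, Finset.mem_Ico] at this
      exact Nat.div_eq_of_lt_le this.1 this.2
    have e2 : g j / 2 ^ (σ₂ j).1 = (σ₂ j).2 := by
      have := h₂.2 j
      simp only [dyInt, Finset.mem_Ico] at this
      exact Nat.div_eq_of_lt_le this.1 this.2
    exact Prod.ext hlev (by rw [← e1, ← e2, hlev])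

lemma count_lemma {X : Type*} [DecidableEq X] (d k L : ℕ) (P : Finset X) (n₂ : ℕ)
    (F : X → Fin d → ℕ) (A B : Fin n₂ → Fin d → ℕ) (hB : ∀ q j, B q j ≤ 2 ^ L)
    (hkk : ¬ ∃ (P' : Finset X) (Q' : Finset (Fin n₂)), P' ⊆ P ∧ P'.card = k ∧ Q'.card = k ∧
      ∀ p ∈ P', ∀ q ∈ Q', ∀ j, F p j ∈ Finset.Ico (A q j) (B q j)) :
    ∑ q : Fin n₂, (P.filter fun p => ∀ j, F p j ∈ Finset.Ico (A q j) (B q j)).card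
      ≤ k * (P.card + n₂) * (2 * (L + 1)) ^ d := by
  classical
  choose T hTc hTl hTcov using fun (q : Fin n₂) (j : Fin d) =>
    dyCovers_main L (A q j) (B q j) (hB q j)
  set S : Fin n₂ → Finset (Fin d → ℕ × ℕ) := fun q => Fintype.piFinset (T q) with hS
  set U := Finset.univ.biUnion S with hU
  set cnt : (Fin d → ℕ × ℕ) → ℕ :=
    fun σ => (P.filter fun p => ∀ j, F p j ∈ dyInt (σ j)).card with hcnt
  set m : (Fin d → ℕ × ℕ) → ℕ :=
    fun σ => (Finset.univ.filter fun q => σ ∈ S q).card with hm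
  -- step 1
  have h1 : ∀ q : Fin n₂, (P.filter fun p => ∀ j, F p j ∈ Finset.Ico (A q j) (B q j)).card
      ≤ ∑ σ ∈ S q, cnt σ := by
    intro q
    refine le_trans (Finset.card_le_card ?_) Finset.card_biUnion_le
    intro p hp
    rw [Finset.mem_filter] at hp
    have hchoice : ∀ j, ∃ t ∈ T q j, F p j ∈ dyInt t := fun j => (hTcov q j (F p j)).1 (hp.2 j)
    choose σ hσT hσm using hchoice
    exact Finset.mem_biUnion.2 ⟨σ, Fintype.mem_piFinset.2 hσT, Finset.mem_filter.2 ⟨hp.1, hσm⟩⟩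
  have h2 : ∑ q : Fin n₂, ∑ σ ∈ S q, cnt σ = ∑ σ ∈ U, m σ * cnt σ := sum_sum_eq S cnt
  -- K_{k,k}-freeness: for each shape, cnt < k or m < k
  have hkey : ∀ σ ∈ U, m σ * cnt σ ≤ k * (cnt σ + m σ) := by
    intro σ _
    have hmin : cnt σ < k ∨ m σ < k := by
      by_contra hcon
      push_neg at hcon
      obtain ⟨hc, hmm⟩ := hcon
      obtain ⟨P', hP'sub, hP'card⟩ := Finset.exists_subset_card_eq hc
      obtain ⟨Q', hQ'sub, hQ'card⟩ := Finset.exists_subset_card_eq hmm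
      refine hkk ⟨P', Q', le_trans hP'sub (Finset.filter_subset _ _), hP'card, hQ'card, ?_⟩
      intro p hp q hq j
      have hpσ : ∀ j, F p j ∈ dyInt (σ j) := (Finset.mem_filter.1 (hP'sub hp)).2
      have hqσ : σ ∈ S q := (Finset.mem_filter.1 (hQ'sub hq)).2
      have hσT : σ j ∈ T q j := Fintype.mem_piFinset.1 hqσ j
      exact (hTcov q j (F p j)).2 ⟨σ j, hσT, hpσ j⟩
    rcases hmin with h | h
    · calc m σ * cnt σ ≤ m σ * k := Nat.mul_le_mul_left _ (le_of_lt h)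
        _ = k * m σ := Nat.mul_comm _ _
        _ ≤ k * (cnt σ + m σ) := Nat.mul_le_mul_left _ (by omega)
    · calc m σ * cnt σ ≤ k * cnt σ := Nat.mul_le_mul_right _ (le_of_lt h)
        _ ≤ k * (cnt σ + m σ) := Nat.mul_le_mul_left _ (by omega)
  -- sum of multiplicities
  have hsm : ∑ σ ∈ U, m σ ≤ n₂ * (2 * (L + 1)) ^ d := by
    have key : ∑ σ ∈ U, m σ = ∑ q : Fin n₂, (S q).card := by
      have := sum_sum_eq S (fun _ => 1)
      simp only [Finset.sum_const, smul_eq_mul, mul_one] at this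
      exact this.symm
    rw [key]
    calc ∑ q : Fin n₂, (S q).card ≤ ∑ _q : Fin n₂, (2 * (L + 1)) ^ d := by
          refine Finset.sum_le_sum fun q _ => ?_
          rw [hS]
          rw [Fintype.card_piFinset]
          calc ∏ j, (T q j).card ≤ ∏ _j : Fin d, 2 * (L + 1) :=
                Finset.prod_le_prod' fun j _ => hTc q j
            _ = (2 * (L + 1)) ^ d := by simp
      _ = n₂ * (2 * (L + 1)) ^ d := by simp [Finset.sum_const]
  -- sum of counts
  have hsc : ∑ σ ∈ U, cnt σ ≤ P.card * (L + 1) ^ d := by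
    have hswap : ∑ σ ∈ U, cnt σ
        = ∑ p ∈ P, (U.filter fun σ => ∀ j, F p j ∈ dyInt (σ j)).card := by
      simp only [hcnt, Finset.card_filter]
      exact Finset.sum_comm
    rw [hswap]
    calc ∑ p ∈ P, (U.filter fun σ => ∀ j, F p j ∈ dyInt (σ j)).card
        ≤ ∑ _p ∈ P, (L + 1) ^ d := by
          refine Finset.sum_le_sum fun p _ => ?_
          refine shapes_containing (F p) U fun σ hσ j => ?_
          obtain ⟨q, _, hq⟩ := Finset.mem_biUnion.1 hσ
          exact hTl q j _ (Fintype.mem_piFinset.1 hq j)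
      _ = P.card * (L + 1) ^ d := by simp [Finset.sum_const]
  -- combine
  calc ∑ q : Fin n₂, (P.filter fun p => ∀ j, F p j ∈ Finset.Ico (A q j) (B q j)).card
      ≤ ∑ q : Fin n₂, ∑ σ ∈ S q, cnt σ := Finset.sum_le_sum fun q _ => h1 q
    _ = ∑ σ ∈ U, m σ * cnt σ := h2
    _ ≤ ∑ σ ∈ U, k * (cnt σ + m σ) := Finset.sum_le_sum hkey
    _ = k * (∑ σ ∈ U, cnt σ + ∑ σ ∈ U, m σ) := by
        rw [← Finset.mul_sum, Finset.sum_add_distrib]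
    _ ≤ k * (P.card * (L + 1) ^ d + n₂ * (2 * (L + 1)) ^ d) := by
        exact Nat.mul_le_mul_left _ (Nat.add_le_add hsc hsm)
    _ ≤ k * (P.card + n₂) * (2 * (L + 1)) ^ d := by
        have hpow : (L + 1) ^ d ≤ (2 * (L + 1)) ^ d :=
          Nat.pow_le_pow_left (by omega) d
        calc k * (P.card * (L + 1) ^ d + n₂ * (2 * (L + 1)) ^ d)
            ≤ k * (P.card * (2 * (L + 1)) ^ d + n₂ * (2 * (L + 1)) ^ d) :=
              Nat.mul_le_mul_left _ (Nat.add_le_add_right (Nat.mul_le_mul_left _ hpow) _)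
          _ = k * (P.card + n₂) * (2 * (L + 1)) ^ d := by ring

/-- For every `d, k` there is `α` such that: for any finite set `P` of points in `ℝ^d`
and any finite list (of length `n₂`) of boxes in `ℝ^d` — each box a product of `d`
intervals (arbitrary intervals, i.e. order-connected subsets of `ℝ`, so with open or
closed, possibly unbounded endpoints) — if the incidence graph is `K_{k,k}`-free, then
the number of incidences is at most `α · n · log^{2d} n`, where `n = |P| + n₂`. -/
theorem box_incidence_bound (d k : ℕ) :
    ∃ α : ℝ, ∀ (P : Finset (Fin d → ℝ)) (n₂ : ℕ) (I : Fin n₂ → Fin d → Set ℝ),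
      (∀ q j, (I q j).OrdConnected) →
      (¬ ∃ (P' : Finset (Fin d → ℝ)) (Q' : Finset (Fin n₂)),
          P' ⊆ P ∧ P'.card = k ∧ Q'.card = k ∧
          ∀ p ∈ P', ∀ q ∈ Q', p ∈ boxOf (I q)) →
      (Set.ncard {pq : (Fin d → ℝ) × Fin n₂ |
          pq.1 ∈ P ∧ pq.1 ∈ boxOf (I pq.2)} : ℝ) ≤
        α * ((P.card + n₂ : ℕ) : ℝ) * Real.log ((P.card + n₂ : ℕ) : ℝ) ^ (2 * d) := by
  classical
  rcases Nat.eq_zero_or_pos k with rfl | hk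
  · exact ⟨0, fun P n₂ I _ hkk =>
      absurd ⟨∅, ∅, Finset.empty_subset _, rfl, rfl, by simp⟩ hkk⟩
  refine ⟨(k : ℝ) * (6 / Real.log 2 ^ 2) ^ d, ?_⟩
  intro P n₂ I hord hkk
  -- the incidence set as a Finset
  have hset : {pq : (Fin d → ℝ) × Fin n₂ | pq.1 ∈ P ∧ pq.1 ∈ boxOf (I pq.2)} =
      ↑((P ×ˢ (Finset.univ : Finset (Fin n₂))).filter fun pq => pq.1 ∈ boxOf (I pq.2)) := by
    ext pq
    simp only [Set.mem_setOf_eq, Finset.coe_filter, Finset.mem_product, Finset.mem_univ,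
      and_true]
  rw [hset, Set.ncard_coe_finset]
  have hcard : ((P ×ˢ (Finset.univ : Finset (Fin n₂))).filter
        fun pq => pq.1 ∈ boxOf (I pq.2)).card
      = ∑ q : Fin n₂, (P.filter fun p => p ∈ boxOf (I q)).card := by
    rw [Finset.card_filter, Finset.sum_product, Finset.sum_comm]
    exact Finset.sum_congr rfl fun q _ => (Finset.card_filter _ _).symm
  rw [hcard]
  -- rank functions
  set V : Fin d → Finset ℝ := fun j => P.image (fun p => p j) with hV
  set rk : Fin d → ℝ → ℕ := fun j x => ((V j).filter (· < x)).card with hrk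
  have rkmono : ∀ j (x y : ℝ), x ≤ y → rk j x ≤ rk j y := by
    intro j x y hxy
    refine Finset.card_le_card fun z hz => ?_
    rw [Finset.mem_filter] at *
    exact ⟨hz.1, lt_of_lt_of_le hz.2 hxy⟩
  have rkstrict : ∀ j (x y : ℝ), x ∈ V j → x < y → rk j x < rk j y := by
    intro j x y hx hxy
    refine Finset.card_lt_card ⟨fun z hz => by
      rw [Finset.mem_filter] at *; exact ⟨hz.1, lt_trans hz.2 hxy⟩, fun hsub => ?_⟩
    have : x ∈ (V j).filter (· < y) := Finset.mem_filter.2 ⟨hx, hxy⟩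
    have := Finset.mem_filter.1 (hsub this)
    exact lt_irrefl x this.2
  have rkbound : ∀ j (x : ℝ), x ∈ V j → rk j x < P.card := by
    intro j x hx
    have h1 : rk j x < (V j).card := by
      refine Finset.card_lt_card ⟨Finset.filter_subset _ _, fun hsub => ?_⟩
      have := Finset.mem_filter.1 (hsub hx)
      exact lt_irrefl x this.2
    exact lt_of_lt_of_le h1 Finset.card_image_le
  -- the integer intervals
  set W : Fin n₂ → Fin d → Finset ℝ := fun q j => (V j).filter (· ∈ I q j) with hW
  set A : Fin n₂ → Fin d → ℕ := fun q j =>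
    if h : (W q j).Nonempty then rk j ((W q j).min' h) else 1 with hA
  set B : Fin n₂ → Fin d → ℕ := fun q j =>
    if h : (W q j).Nonempty then rk j ((W q j).max' h) + 1 else 0 with hB
  have key : ∀ (q : Fin n₂) (j : Fin d) (x : ℝ), x ∈ V j →
      (x ∈ I q j ↔ rk j x ∈ Finset.Ico (A q j) (B q j)) := by
    intro q j x hx
    by_cases hne : (W q j).Nonempty
    · have hAq : A q j = rk j ((W q j).min' hne) := by rw [hA]; exact dif_pos hne
      have hBq : B q j = rk j ((W q j).max' hne) + 1 := by rw [hB]; exact dif_pos hne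
      have hminW := (W q j).min'_mem hne
      have hmaxW := (W q j).max'_mem hne
      have hminV : (W q j).min' hne ∈ V j := (Finset.mem_filter.1 hminW).1
      have hmaxV : (W q j).max' hne ∈ V j := (Finset.mem_filter.1 hmaxW).1
      have hminI : (W q j).min' hne ∈ I q j := (Finset.mem_filter.1 hminW).2
      have hmaxI : (W q j).max' hne ∈ I q j := (Finset.mem_filter.1 hmaxW).2
      constructor
      · intro hxI
        have hxW : x ∈ W q j := Finset.mem_filter.2 ⟨hx, hxI⟩
        rw [Finset.mem_Ico, hAq, hBq]
        exact ⟨rkmono j _ _ ((W q j).min'_le x hxW),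
          Nat.lt_succ_of_le (rkmono j _ _ ((W q j).le_max' x hxW))⟩
      · intro hxr
        rw [Finset.mem_Ico, hAq, hBq] at hxr
        have h1 : (W q j).min' hne ≤ x := by
          by_contra hcon
          push_neg at hcon
          exact absurd hxr.1 (Nat.not_le.2 (rkstrict j _ _ hx hcon))
        have h2 : x ≤ (W q j).max' hne := by
          by_contra hcon
          push_neg at hcon
          have := rkstrict j _ _ hmaxV hcon
          omega
        exact (hord q j).out hminI hmaxI ⟨h1, h2⟩
    · have hAq : A q j = 1 := by rw [hA]; exact dif_neg hne
      have hBq : B q j = 0 := by rw [hB]; exact dif_neg hne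
      constructor
      · intro hxI
        exact absurd ⟨x, Finset.mem_filter.2 ⟨hx, hxI⟩⟩ hne
      · intro hxr
        rw [Finset.mem_Ico, hAq, hBq] at hxr
        omega
  set L := Nat.clog 2 P.card with hLdef
  have hLb : P.card ≤ 2 ^ L := Nat.le_pow_clog (by norm_num) _
  have hBbound : ∀ q j, B q j ≤ 2 ^ L := by
    intro q j
    by_cases hne : (W q j).Nonempty
    · have hBq : B q j = rk j ((W q j).max' hne) + 1 := by rw [hB]; exact dif_pos hne
      have hmaxV : (W q j).max' hne ∈ V j := (Finset.mem_filter.1 ((W q j).max'_mem hne)).1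
      have := rkbound j _ hmaxV
      omega
    · have hBq : B q j = 0 := by rw [hB]; exact dif_neg hne
      omega
  -- rewrite each filter via the rank characterization
  have hfilter : ∀ q : Fin n₂, (P.filter fun p => p ∈ boxOf (I q))
      = P.filter fun p => ∀ j, rk j (p j) ∈ Finset.Ico (A q j) (B q j) := by
    intro q
    refine Finset.filter_congr fun p hp => ?_
    have hmem : ∀ j, p j ∈ V j := fun j => Finset.mem_image_of_mem _ hp
    simp only [boxOf, Set.mem_setOf_eq]
    exact forall_congr' fun j => key q j (p j) (hmem j)
  have hkk' : ¬ ∃ (P' : Finset (Fin d → ℝ)) (Q' : Finset (Fin n₂)),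
      P' ⊆ P ∧ P'.card = k ∧ Q'.card = k ∧
      ∀ p ∈ P', ∀ q ∈ Q', ∀ j, rk j (p j) ∈ Finset.Ico (A q j) (B q j) := by
    rintro ⟨P', Q', hsub, hPc, hQc, hcond⟩
    refine hkk ⟨P', Q', hsub, hPc, hQc, fun p hp q hq => ?_⟩
    intro j
    exact (key q j (p j) (Finset.mem_image_of_mem _ (hsub hp))).2 (hcond p hp q hq j)
  have hmain : ∑ q : Fin n₂, (P.filter fun p => p ∈ boxOf (I q)).card
      ≤ k * (P.card + n₂) * (2 * (L + 1)) ^ d := by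
    calc ∑ q : Fin n₂, (P.filter fun p => p ∈ boxOf (I q)).card
        = ∑ q : Fin n₂, (P.filter fun p => ∀ j, rk j (p j) ∈ Finset.Ico (A q j) (B q j)).card := by
          exact Finset.sum_congr rfl fun q _ => by rw [hfilter q]
      _ ≤ k * (P.card + n₂) * (2 * (L + 1)) ^ d :=
          count_lemma d k L P n₂ (fun p j => rk j (p j)) A B hBbound hkk'
  -- final real arithmetic
  set n := P.card + n₂ with hn
  rcases le_or_gt n 1 with hn1 | hn2
  · -- degenerate case: no incidences
    have hzero : ∑ q : Fin n₂, (P.filter fun p => p ∈ boxOf (I q)).card = 0 := by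
      rcases (by omega : n₂ = 0 ∨ P.card = 0) with h | h
      · exact Finset.sum_eq_zero fun q _ => absurd q.isLt (by omega)
      · have : P = ∅ := Finset.card_eq_zero.1 h
        subst this
        simp
    rw [hzero]
    have hα : (0:ℝ) ≤ (k : ℝ) * (6 / Real.log 2 ^ 2) ^ d := by positivity
    rcases (by omega : n = 0 ∨ n = 1) with h | h
    · rw [h]
      norm_num
    · rw [h]
      norm_num [Real.log_one]
      rcases Nat.eq_zero_or_pos d with rfl | hd
      · simpa using hα
      · rw [zero_pow (by omega : 2 * d ≠ 0)]
        simp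
  · -- main case: n ≥ 2
    have hl2 : (0 : ℝ) < Real.log 2 := Real.log_pos (by norm_num)
    have hnn : (2 : ℝ) ≤ (n : ℝ) := by exact_mod_cast hn2
    set M := Real.log (n : ℝ) with hM
    have hMl : Real.log 2 ≤ M := Real.log_le_log (by norm_num) hnn
    have hM0 : 0 < M := lt_of_lt_of_le hl2 hMl
    set L' := Nat.clog 2 n with hL'
    have hLL' : L ≤ L' := Nat.clog_mono_right 2 (by omega)
    have hL'bound : (L' : ℝ) ≤ M / Real.log 2 + 1 := by
      rcases Nat.eq_zero_or_pos L' with h0 | hpos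
      · rw [h0]
        have : 1 ≤ M / Real.log 2 := (one_le_div hl2).2 hMl
        push_cast
        linarith
      · have hpow : 2 ^ (L' - 1) < n := by
          have := Nat.pow_pred_clog_lt_self (b := 2) (by norm_num) (x := n) (by omega)
          simpa [Nat.pred_eq_sub_one] using this
        have hpowR : ((2 : ℝ)) ^ (L' - 1) ≤ (n : ℝ) := by
          exact_mod_cast le_of_lt hpow
        have hlog := Real.log_le_log (by positivity) hpowR
        rw [Real.log_pow] at hlog
        have h1 : ((L' - 1 : ℕ) : ℝ) ≤ M / Real.log 2 := by
          rw [le_div_iff₀ hl2]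
          exact hlog
        have h2 : ((L' - 1 : ℕ) : ℝ) = (L' : ℝ) - 1 := by
          push_cast [hpos]
          ring
        linarith [h1, h2.symm.le]
    have hkey2 : (2 * ((L : ℝ) + 1)) ≤ 6 / Real.log 2 ^ 2 * M ^ 2 := by
      have h1 : (L : ℝ) ≤ (L' : ℝ) := by exact_mod_cast hLL'
      set r : ℝ := M / Real.log 2 with hr
      have hr1 : 1 ≤ r := (one_le_div hl2).2 hMl
      have he : 6 / Real.log 2 ^ 2 * M ^ 2 = 6 * r ^ 2 := by
        rw [hr]
        field_simp
      rw [he]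
      nlinarith [sq_nonneg (r - 1), hL'bound, h1]
    -- cast and conclude
    have hcast : ((∑ q : Fin n₂, (P.filter fun p => p ∈ boxOf (I q)).card : ℕ) : ℝ)
        ≤ (k : ℝ) * (n : ℝ) * (2 * ((L : ℝ) + 1)) ^ d := by
      exact_mod_cast hmain
    have hpowle : (2 * ((L : ℝ) + 1)) ^ d ≤ (6 / Real.log 2 ^ 2) ^ d * M ^ (2 * d) := by
      calc (2 * ((L : ℝ) + 1)) ^ d ≤ (6 / Real.log 2 ^ 2 * M ^ 2) ^ d :=
            pow_le_pow_left₀ (by positivity) hkey2 d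
        _ = (6 / Real.log 2 ^ 2) ^ d * M ^ (2 * d) := by
            rw [mul_pow, ← pow_mul]
    calc ((∑ q : Fin n₂, (P.filter fun p => p ∈ boxOf (I q)).card : ℕ) : ℝ)
        ≤ (k : ℝ) * (n : ℝ) * (2 * ((L : ℝ) + 1)) ^ d := hcast
      _ ≤ (k : ℝ) * (n : ℝ) * ((6 / Real.log 2 ^ 2) ^ d * M ^ (2 * d)) := by
          refine mul_le_mul_of_nonneg_left hpowle (by positivity)
      _ = (k : ℝ) * (6 / Real.log 2 ^ 2) ^ d * (n : ℝ) * M ^ (2 * d) := by ring
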